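/- For every real z > 0, the inequalities ln z − 1/z ≤ Φ(z) ≤ ln z − 1/(2z) hold. -/

import Mathlib

open Real Filter Topology

open Finset


lemma aux_inv_le (a : ℝ) (ha : 0 < a) : (a+1)⁻¹ ≤ Real.log (a+1) - Real.log a := by
  have h := Real.log_le_sub_one_of_pos (x := a/(a+1)) (by positivity)
  rw [Real.log_div ha.ne' (by positivity)] at h
  have h2 : a/(a+1) - 1 = -(a+1)⁻¹ := by field_simp; ring
  linarith

lemma aux_trapezoid (a : ℝ) (ha : 0 < a) :
    Real.log (a+1) - Real.log a ≤ (a⁻¹ + (a+1)⁻¹)/2 := by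
  have h0 : (0:ℝ) < (a+1)/a := by positivity
  have h1 := Real.sinh_log h0
  have h2 : Real.log ((a+1)/a) ≤ Real.sinh (Real.log ((a+1)/a)) :=
    Real.self_le_sinh_iff.2 (Real.log_nonneg (by rw [le_div_iff₀ ha]; linarith))
  rw [h1, Real.log_div (by positivity) ha.ne'] at h2
  have h3 : ((a+1)/a - ((a+1)/a)⁻¹)/2 = (a⁻¹ + (a+1)⁻¹)/2 := by
    rw [inv_div]; field_simp; ring
  linarith [h3 ▸ h2]

-- telescoping log sum
lemma sum_log_tele (z : ℝ) (n : ℕ) :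
    ∑ m ∈ range n, (Real.log (z+(m+1:ℕ)) - Real.log (z+m)) = Real.log (z+n) - Real.log z := by
  rw [Finset.sum_range_sub (f := fun m : ℕ => Real.log (z+m))]
  norm_num

lemma aux_sq_tele (a : ℝ) (ha : 0 < a) : ((a+1)⁻¹)^2 ≤ a⁻¹ - (a+1)⁻¹ := by
  have h1 : a⁻¹ - (a+1)⁻¹ = (a*(a+1))⁻¹ := by field_simp; ring
  rw [h1, sq, ← mul_inv]
  apply inv_anti₀ (by positivity)
  nlinarith

lemma sum_inv_ge (z : ℝ) (hz : 0 < z) (n : ℕ) :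
    Real.log (z+n) - Real.log z + 1/(2*z) ≤ ∑ m ∈ range (n+1), (z+m)⁻¹ := by
  have key : ∀ m ∈ range n, Real.log (z+(m+1:ℕ)) - Real.log (z+m)
      ≤ ((z+m)⁻¹ + (z+(m+1:ℕ))⁻¹)/2 := by
    intro m _
    have := aux_trapezoid (z+m) (by positivity)
    push_cast
    convert this using 3 <;> ring
  have h1 := Finset.sum_le_sum key
  rw [sum_log_tele] at h1
  have e1 : ∑ m ∈ range n, ((z+m)⁻¹ + (z+(m+1:ℕ))⁻¹)/2
      = (∑ m ∈ range n, (z+m)⁻¹)/2 + (∑ m ∈ range n, (z+(m+1:ℕ))⁻¹)/2 := by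
    rw [← add_div, ← Finset.sum_add_distrib, Finset.sum_div]
  have e2 : ∑ m ∈ range (n+1), (z+m)⁻¹ = (∑ m ∈ range n, (z+m)⁻¹) + (z+n)⁻¹ :=
    Finset.sum_range_succ _ n
  have e3 : ∑ m ∈ range (n+1), (z+m)⁻¹ = (∑ m ∈ range n, (z+(m+1:ℕ))⁻¹) + z⁻¹ := by
    rw [Finset.sum_range_succ' (fun m : ℕ => (z+m)⁻¹)]; norm_num
  have h3 : (0:ℝ) ≤ (z+n)⁻¹ := by positivity
  have h4 : 1/(2*z) = z⁻¹/2 := by rw [one_div, mul_inv]; ring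
  rw [e1] at h1
  linarith

lemma sum_inv_le (z : ℝ) (hz : 0 < z) (n : ℕ) :
    ∑ m ∈ range (n+1), (z+m)⁻¹ ≤ z⁻¹ + (Real.log (z+n) - Real.log z) := by
  have key : ∀ m ∈ range n, (z+(m+1:ℕ))⁻¹ ≤ Real.log (z+(m+1:ℕ)) - Real.log (z+m) := by
    intro m _
    have h := aux_inv_le (z+m) (by positivity)
    push_cast [← add_assoc]
    exact h
  have h1 := Finset.sum_le_sum key
  rw [sum_log_tele] at h1
  have e3 : ∑ m ∈ range (n+1), (z+m)⁻¹ = (∑ m ∈ range n, (z+(m+1:ℕ))⁻¹) + z⁻¹ := by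
    rw [Finset.sum_range_succ' (fun m : ℕ => (z+m)⁻¹)]; norm_num
  linarith

lemma sum_sq_le (z : ℝ) (hz : 0 < z) (n : ℕ) :
    ∑ m ∈ range (n+1), ((z+m)⁻¹)^2 ≤ z⁻¹^2 + z⁻¹ := by
  have key : ∀ m ∈ range n, ((z+(m+1:ℕ))⁻¹)^2 ≤ (z+m)⁻¹ - (z+(m+1:ℕ))⁻¹ := by
    intro m _
    have h := aux_sq_tele (z+m) (by positivity)
    push_cast [← add_assoc]
    exact h
  have h1 := Finset.sum_le_sum key
  rw [Finset.sum_range_sub' (f := fun m : ℕ => (z+m)⁻¹)] at h1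
  have e3 : ∑ m ∈ range (n+1), ((z+m)⁻¹)^2
      = (∑ m ∈ range n, ((z+(m+1:ℕ))⁻¹)^2) + (z⁻¹)^2 := by
    rw [Finset.sum_range_succ' (fun m : ℕ => ((z+m)⁻¹)^2)]; norm_num
  have h3 : (0:ℝ) ≤ (z+n)⁻¹ := by positivity
  simp only [Nat.cast_zero, add_zero] at h1
  linarith

-- difference formula
lemma lgs_diff (a b : ℝ) (n : ℕ) :
    Real.BohrMollerup.logGammaSeq b n - Real.BohrMollerup.logGammaSeq a n
      = (b-a) * Real.log n - ∑ m ∈ range (n+1), (Real.log (b+m) - Real.log (a+m)) := by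
  unfold Real.BohrMollerup.logGammaSeq
  rw [Finset.sum_sub_distrib]
  ring

-- log n - log (z+n) → 0
lemma log_ratio_tendsto (z : ℝ) (hz : 0 < z) :
    Tendsto (fun n : ℕ => Real.log n - Real.log (z+n)) atTop (𝓝 0) := by
  have h1 : Tendsto (fun n : ℕ => 1 + z/n) atTop (𝓝 1) := by
    have := tendsto_const_div_atTop_nhds_zero_nat z
    simpa using tendsto_const_nhds.add this
  have h2 : Tendsto (fun n : ℕ => -Real.log (1 + z/n)) atTop (𝓝 (-Real.log 1)) :=
    ((Real.continuousAt_log (by norm_num)).tendsto.comp h1).neg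
  rw [Real.log_one, neg_zero] at h2
  apply h2.congr'
  filter_upwards [eventually_ge_atTop 1] with n hn
  have hn' : (0:ℝ) < n := by exact_mod_cast hn
  rw [show (1 + z/n : ℝ) = (z+n)/n by field_simp; ring, Real.log_div (by positivity) hn'.ne']
  ring

lemma aux_log_lb (x : ℝ) (hx : 0 ≤ x) : x - x^2 ≤ Real.log (1+x) := by
  have h1 : 1 - (1+x)⁻¹ ≤ Real.log (1+x) := by
    have := Real.log_le_sub_one_of_pos (x := (1+x)⁻¹) (by positivity)
    rw [Real.log_inv] at this; linarith
  have hx1 : (0:ℝ) < 1 + x := by linarith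
  have h2 : x - x^2 ≤ 1 - (1+x)⁻¹ := by
    have e : (1+x)⁻¹ * (1+x) = 1 := inv_mul_cancel₀ hx1.ne'
    nlinarith [sq_nonneg x, mul_pos hx1 hx1]
  linarith

lemma aux_log_ub (x : ℝ) (hx : 0 ≤ x) : Real.log (1+x) ≤ x := by
  have := Real.log_le_sub_one_of_pos (x := 1+x) (by positivity); linarith

lemma log_sub_log (a d : ℝ) (ha : 0 < a) (hd : 0 ≤ d) : Real.log (a+d) - Real.log a = Real.log (1 + d*a⁻¹) := by
  rw [show 1 + d*a⁻¹ = (a+d)/a by field_simp, Real.log_div (by positivity) ha.ne']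


open Real.BohrMollerup in
lemma slope_ub (z h : ℝ) (hz : 0 < z) (hh : 0 < h) :
    Real.log (Real.Gamma (z+h)) - Real.log (Real.Gamma z)
      ≤ h*(Real.log z - 1/(2*z)) + h^2*(z⁻¹^2 + z⁻¹) := by
  have T1 : Tendsto (fun n : ℕ => logGammaSeq (z+h) n - logGammaSeq z n) atTop
      (𝓝 (Real.log (Real.Gamma (z+h)) - Real.log (Real.Gamma z))) :=
    (tendsto_log_gamma (by linarith)).sub (tendsto_log_gamma hz)
  have T2 : Tendsto (fun n : ℕ => h*(Real.log n - Real.log (z+n))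
      + (h*(Real.log z - 1/(2*z)) + h^2*(z⁻¹^2 + z⁻¹))) atTop
      (𝓝 (h*(Real.log z - 1/(2*z)) + h^2*(z⁻¹^2 + z⁻¹))) := by
    have := ((log_ratio_tendsto z hz).const_mul h).add
      (tendsto_const_nhds (x := h*(Real.log z - 1/(2*z)) + h^2*(z⁻¹^2 + z⁻¹)) (f := atTop (α := ℕ)))
    simpa using this
  refine le_of_tendsto_of_tendsto' T1 T2 (fun n => ?_)
  rw [lgs_diff]
  have key : ∀ m ∈ range (n+1),
      h*(z+m)⁻¹ - h^2*((z+m)⁻¹)^2 ≤ Real.log (z+h+m) - Real.log (z+m) := by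
    intro m _
    have hzm : (0:ℝ) < z + m := by positivity
    have e : Real.log (z+h+m) - Real.log (z+m) = Real.log (1 + h*(z+m)⁻¹) := by
      rw [show z+h+(m:ℝ) = (z+m)+h by ring, log_sub_log (z+m) h hzm hh.le]
    rw [e]
    have h2 := aux_log_lb (h*(z+m)⁻¹) (by positivity)
    calc h*(z+m)⁻¹ - h^2*((z+m)⁻¹)^2 = h*(z+m)⁻¹ - (h*(z+m)⁻¹)^2 := by ring
    _ ≤ _ := h2
  have hsum := Finset.sum_le_sum key
  rw [Finset.sum_sub_distrib, ← Finset.mul_sum, ← Finset.mul_sum] at hsum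
  have m1 : h * (Real.log (z+n) - Real.log z + 1/(2*z)) ≤ h * ∑ m ∈ range (n+1), (z+m)⁻¹ :=
    mul_le_mul_of_nonneg_left (sum_inv_ge z hz n) hh.le
  have m2 : h^2 * ∑ m ∈ range (n+1), ((z+m)⁻¹)^2 ≤ h^2 * (z⁻¹^2 + z⁻¹) :=
    mul_le_mul_of_nonneg_left (sum_sq_le z hz n) (by positivity)
  have step : h*(Real.log (z+n) - Real.log z + 1/(2*z)) - h^2*(z⁻¹^2 + z⁻¹)
      ≤ ∑ m ∈ range (n+1), (Real.log (z+h+m) - Real.log (z+m)) := by linarith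
  calc (z+h-z) * Real.log n - ∑ m ∈ range (n+1), (Real.log (z+h+m) - Real.log (z+m))
      = h * Real.log n - ∑ m ∈ range (n+1), (Real.log (z+h+m) - Real.log (z+m)) := by ring_nf
    _ ≤ h * Real.log n - (h*(Real.log (z+n) - Real.log z + 1/(2*z)) - h^2*(z⁻¹^2 + z⁻¹)) := by
        linarith
    _ = h*(Real.log n - Real.log (z+n)) + (h*(Real.log z - 1/(2*z)) + h^2*(z⁻¹^2 + z⁻¹)) := by
        ring

open Real.BohrMollerup in
lemma slope_lb (y z : ℝ) (hy : 0 < y) (hyz : y < z) :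
    (z-y)*(Real.log y - 1/y) ≤ Real.log (Real.Gamma z) - Real.log (Real.Gamma y) := by
  have T1 : Tendsto (fun n : ℕ => logGammaSeq z n - logGammaSeq y n) atTop
      (𝓝 (Real.log (Real.Gamma z) - Real.log (Real.Gamma y))) :=
    (tendsto_log_gamma (by linarith)).sub (tendsto_log_gamma hy)
  have T2 : Tendsto (fun n : ℕ => (z-y)*(Real.log n - Real.log (y+n))
      + (z-y)*(Real.log y - 1/y)) atTop (𝓝 ((z-y)*(Real.log y - 1/y))) := by
    have := ((log_ratio_tendsto y hy).const_mul (z-y)).add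
      (tendsto_const_nhds (x := (z-y)*(Real.log y - 1/y)) (f := atTop (α := ℕ)))
    simpa using this
  refine le_of_tendsto_of_tendsto' T2 T1 (fun n => ?_)
  rw [lgs_diff]
  have hzy : (0:ℝ) < z - y := by linarith
  have key : ∀ m ∈ range (n+1),
      Real.log (z+m) - Real.log (y+m) ≤ (z-y)*(y+m)⁻¹ := by
    intro m _
    have hym : (0:ℝ) < y + m := by positivity
    have e : Real.log (z+m) - Real.log (y+m) = Real.log (1 + (z-y)*(y+m)⁻¹) := by
      rw [show z+(m:ℝ) = (y+m)+(z-y) by ring, log_sub_log (y+m) (z-y) hym hzy.le]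
    rw [e]
    exact aux_log_ub _ (by positivity)
  have hsum := Finset.sum_le_sum key
  rw [← Finset.mul_sum] at hsum
  have m1 : (z-y) * ∑ m ∈ range (n+1), (y+m)⁻¹
      ≤ (z-y) * (y⁻¹ + (Real.log (y+n) - Real.log y)) :=
    mul_le_mul_of_nonneg_left (sum_inv_le y hy n) hzy.le
  calc (z-y)*(Real.log n - Real.log (y+n)) + (z-y)*(Real.log y - 1/y)
      = (z-y) * Real.log n - (z-y) * (y⁻¹ + (Real.log (y+n) - Real.log y)) := by ring
    _ ≤ (z-y) * Real.log n - ∑ m ∈ range (n+1), (Real.log (z+m) - Real.log (y+m)) := by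
        linarith [hsum.trans m1]

/-- The digamma function `Φ(z) = Γ'(z)/Γ(z)`. -/
noncomputable def digamma (z : ℝ) : ℝ := deriv Real.Gamma z / Real.Gamma z

theorem digamma_log_bounds (z : ℝ) (hz : 0 < z) :
    Real.log z - 1 / z ≤ digamma z ∧ digamma z ≤ Real.log z - 1 / (2 * z) := by
  have hne : ∀ m : ℕ, z ≠ -(m:ℝ) :=
    fun m => (((neg_nonpos).2 (Nat.cast_nonneg m)).trans_lt hz).ne'
  have hΓd := Real.differentiableAt_Gamma hne
  have hΓpos := Real.Gamma_pos_of_pos hz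
  set f := fun x : ℝ => Real.log (Real.Gamma x) with hf
  set d := deriv Real.Gamma z / Real.Gamma z with hd
  have hlog : HasDerivAt f d z := (hΓd.hasDerivAt).log hΓpos.ne'
  have hslope := hasDerivAt_iff_tendsto_slope.1 hlog
  have hub : d ≤ Real.log z - 1/(2*z) := by
    have Ts : Tendsto (slope f z) (𝓝[>] z) (𝓝 d) :=
      hslope.mono_left (nhdsWithin_mono z (fun x hx => ne_of_gt hx))
    have Tb : Tendsto (fun y => Real.log z - 1/(2*z) + (y-z)*(z⁻¹^2+z⁻¹)) (𝓝[>] z)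
        (𝓝 (Real.log z - 1/(2*z))) := by
      have hc : Continuous fun y : ℝ => Real.log z - 1/(2*z) + (y-z)*(z⁻¹^2+z⁻¹) := by
        continuity
      have := hc.tendsto z
      simp only [sub_self, zero_mul, add_zero] at this
      exact this.mono_left nhdsWithin_le_nhds
    refine le_of_tendsto_of_tendsto Ts Tb ?_
    filter_upwards [self_mem_nhdsWithin] with y hy
    have hh : 0 < y - z := sub_pos.2 hy
    have hb := slope_ub z (y-z) hz hh
    rw [show z + (y-z) = y by ring] at hb
    rw [slope_def_field, div_le_iff₀ hh]
    calc f y - f z ≤ (y-z)*(Real.log z - 1/(2*z)) + (y-z)^2*(z⁻¹^2 + z⁻¹) := hb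
      _ = (Real.log z - 1/(2*z) + (y-z)*(z⁻¹^2+z⁻¹)) * (y-z) := by ring
  have hlb : Real.log z - 1/z ≤ d := by
    have Ts : Tendsto (slope f z) (𝓝[<] z) (𝓝 d) :=
      hslope.mono_left (nhdsWithin_mono z (fun x hx => ne_of_lt hx))
    have Tb : Tendsto (fun y => Real.log y - 1/y) (𝓝[<] z) (𝓝 (Real.log z - 1/z)) := by
      have hc : ContinuousAt (fun y : ℝ => Real.log y - 1/y) z :=
        (Real.continuousAt_log hz.ne').sub (continuousAt_const.div continuousAt_id hz.ne')
      exact hc.tendsto.mono_left nhdsWithin_le_nhds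
    refine le_of_tendsto_of_tendsto Tb Ts ?_
    filter_upwards [Ioo_mem_nhdsLT_of_mem (show z ∈ Set.Ioc 0 z from ⟨hz, le_refl z⟩)]
      with y hy
    have hh : 0 < z - y := sub_pos.2 hy.2
    have hb := slope_lb y z hy.1 hy.2
    rw [slope_def_field, show (f y - f z)/(y-z) = (f z - f y)/(z-y) from by
      rw [← neg_sub (f z), ← neg_sub z y, neg_div_neg_eq], le_div_iff₀ hh]
    calc (Real.log y - 1/y) * (z-y) = (z-y)*(Real.log y - 1/y) := by ring
      _ ≤ f z - f y := hb
  exact ⟨hlb, hub⟩
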